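/- In any orientation of V8, every directed cycle of length 4 is an induced cycle and is undominated. -/
import Mathlib


/-- Adjacency in `V₈`, the four-rung Möbius ladder: `j` is adjacent to `j - 1`,
`j + 1` and `j + 4` (mod 8). -/
def V8Adj (i j : ZMod 8) : Prop := j = i + 1 ∨ i = j + 1 ∨ j = i + 4

/-- `E` is an orientation of `V₈`: for every pair of adjacent vertices exactly one
of the two arcs between them is present, and there are no arcs between non-adjacent
vertices. -/
def IsV8Orientation (E : ZMod 8 → ZMod 8 → Prop) : Prop :=
  (∀ i j, E i j → V8Adj i j) ∧ ∀ i j, V8Adj i j → (E i j ↔ ¬ E j i)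

/-- A directed cycle of length `k` in the digraph `E`. -/
def IsDirCycle {V : Type*} (E : V → V → Prop) (k : ℕ) (f : ZMod k → V) : Prop :=
  3 ≤ k ∧ Function.Injective f ∧ ∀ t : ZMod k, E (f t) (f (t + 1))

/-- The cycle `f` is induced: the only arcs between vertices of the cycle are the
consecutive arcs `f t → f (t+1)`. -/
def IsInducedDirCycle {V : Type*} (E : V → V → Prop) (k : ℕ) (f : ZMod k → V) : Prop :=
  ∀ s t : ZMod k, E (f s) (f t) → t = s + 1

/-- The cycle `f` is undominated: no vertex `u` outside the cycle has arcs to two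
distinct vertices of the cycle. -/
def IsUndominatedDirCycle {V : Type*} (E : V → V → Prop) (k : ℕ) (f : ZMod k → V) : Prop :=
  ∀ u : V, u ∉ Set.range f → ¬ ∃ s t : ZMod k, f s ≠ f t ∧ E u (f s) ∧ E u (f t)

/-- In any orientation of `V₈`, every directed cycle of length 4 is an induced
cycle and is undominated. -/

instance (i j : ZMod 8) : Decidable (V8Adj i j) := by unfold V8Adj; infer_instance

lemma v8_no_self_adj : ∀ x : ZMod 8, ¬ V8Adj x x := by decide

set_option maxRecDepth 100000 in
set_option maxHeartbeats 2000000 in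
/-- Any (undirected) 4-cycle in `V₈` has no chords. -/
lemma v8_four_cycle_no_chord : ∀ a b c d : ZMod 8,
    a ≠ c → b ≠ d →
    V8Adj a b → V8Adj b c → V8Adj c d → V8Adj d a →
    ¬ V8Adj a c ∧ ¬ V8Adj c a ∧ ¬ V8Adj b d ∧ ¬ V8Adj d b := by decide

set_option maxRecDepth 100000 in
set_option maxHeartbeats 2000000 in
/-- Every vertex outside a 4-cycle of `V₈` has at most one neighbour on it. -/
lemma v8_four_cycle_dom : ∀ a b c d u : ZMod 8,
    a ≠ b → a ≠ c → a ≠ d → b ≠ c → b ≠ d → c ≠ d →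
    V8Adj a b → V8Adj b c → V8Adj c d → V8Adj d a →
    u ≠ a → u ≠ b → u ≠ c → u ≠ d →
    (V8Adj u a → ¬ V8Adj u b ∧ ¬ V8Adj u c ∧ ¬ V8Adj u d) ∧
    (V8Adj u b → ¬ V8Adj u c ∧ ¬ V8Adj u d) ∧
    (V8Adj u c → ¬ V8Adj u d) := by decide

theorem v8_four_cycle_undominated_induced
    (E : ZMod 8 → ZMod 8 → Prop) (hE : IsV8Orientation E)
    (f : ZMod 4 → ZMod 8) (hf : IsDirCycle E 4 f) :
    IsInducedDirCycle E 4 f ∧ IsUndominatedDirCycle E 4 f := by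
  obtain ⟨-, hinj, hcyc⟩ := hf
  obtain ⟨hadjE, hor⟩ := hE
  have h4 : ∀ x : ZMod 4, x = 0 ∨ x = 1 ∨ x = 2 ∨ x = 3 := by decide
  have k0 : (0 : ZMod 4) + 1 = 1 := by decide
  have k1 : (1 : ZMod 4) + 1 = 2 := by decide
  have k2 : (2 : ZMod 4) + 1 = 3 := by decide
  have k3 : (3 : ZMod 4) + 1 = 0 := by decide
  have e01 := hcyc 0; rw [k0] at e01
  have e12 := hcyc 1; rw [k1] at e12
  have e23 := hcyc 2; rw [k2] at e23
  have e30 := hcyc 3; rw [k3] at e30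
  have a01 := hadjE _ _ e01
  have a12 := hadjE _ _ e12
  have a23 := hadjE _ _ e23
  have a30 := hadjE _ _ e30
  have dne : ∀ i j : ZMod 4, i ≠ j → f i ≠ f j := fun i j h hh => h (hinj hh)
  obtain ⟨c02, c20, c13, c31⟩ := v8_four_cycle_no_chord (f 0) (f 1) (f 2) (f 3)
    (dne 0 2 (by decide)) (dne 1 3 (by decide)) a01 a12 a23 a30
  constructor
  · intro s t hst
    have hadjst := hadjE _ _ hst
    rcases h4 s with rfl | rfl | rfl | rfl <;> rcases h4 t with rfl | rfl | rfl | rfl <;>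
      first
        | decide
        | exact absurd hadjst (v8_no_self_adj _)
        | exact absurd hadjst c02
        | exact absurd hadjst c20
        | exact absurd hadjst c13
        | exact absurd hadjst c31
        | exact absurd hst ((hor _ _ a01).mp e01)
        | exact absurd hst ((hor _ _ a12).mp e12)
        | exact absurd hst ((hor _ _ a23).mp e23)
        | exact absurd hst ((hor _ _ a30).mp e30)
  · rintro u hu ⟨s, t, hne', hs, ht⟩
    have hud : ∀ i, u ≠ f i := fun i h => hu ⟨i, h.symm⟩
    obtain ⟨D0, D1, D2⟩ := v8_four_cycle_dom (f 0) (f 1) (f 2) (f 3) u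
      (dne 0 1 (by decide)) (dne 0 2 (by decide)) (dne 0 3 (by decide))
      (dne 1 2 (by decide)) (dne 1 3 (by decide)) (dne 2 3 (by decide))
      a01 a12 a23 a30 (hud 0) (hud 1) (hud 2) (hud 3)
    have hAs := hadjE _ _ hs
    have hAt := hadjE _ _ ht
    rcases h4 s with rfl | rfl | rfl | rfl <;> rcases h4 t with rfl | rfl | rfl | rfl <;>
      first
        | exact hne' rfl
        | exact (D0 hAs).1 hAt
        | exact (D0 hAt).1 hAs
        | exact (D0 hAs).2.1 hAt
        | exact (D0 hAt).2.1 hAs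
        | exact (D0 hAs).2.2 hAt
        | exact (D0 hAt).2.2 hAs
        | exact (D1 hAs).1 hAt
        | exact (D1 hAt).1 hAs
        | exact (D1 hAs).2 hAt
        | exact (D1 hAt).2 hAs
        | exact D2 hAs hAt
        | exact D2 hAt hAs
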